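/- Let n be a positive integer. The map X ↦ top(X) on triangulations of the punctured n-gon is injective: if X, X' ∈ 𝒯(n) satisfy top(X) = top(X'), then X = X'. -/

import Mathlib

/-!
Combinatorial model of admissible arcs and triangulations of a regular
`n`-gon with one puncture (following Adachi, "The classification of
τ-tilting modules over Nakayama algebras").
-/

namespace Punctured

/-- Admissible arcs in a regular `n`-gon with one puncture:
an *inner arc* `inner i t` runs counterclockwise from vertex `i` to vertex
`i + t` (with `2 ≤ t ≤ n` required for admissibility); a *projective arc*
`proj j` runs from the puncture to the vertex `j`. -/
inductive Arc (n : ℕ) : Type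
  | inner (i : ZMod n) (t : ℕ) : Arc n
  | proj (j : ZMod n) : Arc n

namespace Arc

/-- The terminal point of an admissible arc. -/
def terminal {n : ℕ} : Arc n → ZMod n
  | .inner i t => i + (t : ZMod n)
  | .proj j => j

/-- Admissibility: inner arcs must have length `2 ≤ t ≤ n`. -/
def IsAdmissible {n : ℕ} : Arc n → Prop
  | .inner _ t => 2 ≤ t ∧ t ≤ n
  | .proj _ => True

/-- Compatibility (non-crossing) of two admissible arcs, defined via
lifts to `ℤ`. -/
def Compatible {n : ℕ} : Arc n → Arc n → Prop
  | .inner i t, .inner k s =>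
      ¬ ∃ x y : ℤ, (x : ZMod n) = i ∧ (y : ZMod n) = k ∧
        ((x < y ∧ y < x + (t : ℤ) ∧ x + (t : ℤ) < y + (s : ℤ)) ∨
         (y < x ∧ x < y + (s : ℤ) ∧ y + (s : ℤ) < x + (t : ℤ)))
  | .inner i t, .proj j =>
      ¬ ∃ x y : ℤ, (x : ZMod n) = i ∧ (y : ZMod n) = j ∧ x < y ∧ y < x + (t : ℤ)
  | .proj j, .inner i t =>
      ¬ ∃ x y : ℤ, (x : ZMod n) = i ∧ (y : ZMod n) = j ∧ x < y ∧ y < x + (t : ℤ)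
  | .proj _, .proj _ => True

end Arc

/-- A set of admissible arcs which is pairwise compatible. -/
def PairwiseCompatible (n : ℕ) (X : Set (Arc n)) : Prop :=
  (∀ a ∈ X, a.IsAdmissible) ∧ ∀ a ∈ X, ∀ b ∈ X, a.Compatible b

/-- A triangulation of the punctured `n`-gon: a pairwise compatible set of
admissible arcs, maximal under inclusion among such sets. -/
def IsTriangulation (n : ℕ) (X : Set (Arc n)) : Prop :=
  PairwiseCompatible n X ∧
    ∀ Y : Set (Arc n), PairwiseCompatible n Y → X ⊆ Y → Y = X

/-- `top(X)`: for each residue class `c`, the number of arcs of `X` with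
terminal point `c`. -/
noncomputable def topSeq (n : ℕ) (X : Set (Arc n)) : ZMod n → ℕ :=
  fun c => {arc ∈ X | Arc.terminal arc = c}.ncard

/-- The representative of `p` modulo `n` lying in `{1, …, n}`. -/
def resRep (n : ℕ) (p : ℤ) : ℕ := ((p - 1) % (n : ℤ)).toNat + 1

/-- `a'_p := Σ_{j=1}^{(p)_n} (a_j - 1)`, the `n`-periodic extension of the
partial-sum sequence of `a`. -/
def psum (n : ℕ) (a : ZMod n → ℕ) (p : ℤ) : ℤ :=
  ∑ j ∈ Finset.Icc 1 (resRep n p), ((a ((j : ℕ) : ZMod n) : ℤ) - 1)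

/-- `‖a'‖ := max {a'_1, …, a'_n}`. -/
noncomputable def pnorm (n : ℕ) (a : ZMod n → ℕ) : ℤ :=
  sSup ((fun i : ℕ => psum n a (i : ℤ)) '' Set.Icc 1 n)

/-- `δ_p = 1` if `a'_p = ‖a'‖` and `δ_p = 0` otherwise. -/
noncomputable def deltaInt (n : ℕ) (a : ZMod n → ℕ) (p : ℤ) : ℤ :=
  if psum n a p = pnorm n a then 1 else 0

/-- `k_s^j := max {k ∈ ℤ : k < j - 1 and a'_k = a'_{j-1} + s}`. -/
noncomputable def kmax (n : ℕ) (a : ZMod n → ℕ) (j s : ℤ) : ℤ :=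
  sSup {k : ℤ | k < j - 1 ∧ psum n a k = psum n a (j - 1) + s}

/-- `ℓ_j(a)`. -/
noncomputable def ellj (n : ℕ) (a : ZMod n → ℕ) (j : ℕ) : ℤ :=
  if (a ((j : ℕ) : ZMod n) : ℤ) - deltaInt n a (j : ℤ) = 0 then 0
  else (j : ℤ) - kmax n a (j : ℤ) ((a ((j : ℕ) : ZMod n) : ℤ) - deltaInt n a (j : ℤ))

----------------------------------------------------------------
-- auxiliary development
----------------------------------------------------------------

attribute [local instance] Classical.propDecidable

open Finset

/-- Lifted chords. -/
def Ch (n : ℕ) (X : Set (Arc n)) (x v : ℤ) : Prop :=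
  2 ≤ v - x ∧ Arc.inner (x : ZMod n) (v - x).toNat ∈ X

/-- Lifted rays. -/
def Ry (n : ℕ) (X : Set (Arc n)) (y : ℤ) : Prop :=
  Arc.proj (y : ZMod n) ∈ X

/-- Exposed points. -/
def Exp (n : ℕ) (X : Set (Arc n)) (p : ℤ) : Prop :=
  ∀ x v : ℤ, Ch n X x v → ¬(x < p ∧ p < v)

variable {n : ℕ} {X : Set (Arc n)}

lemma intCast_eq_intCast_iff_dvd (x y : ℤ) :
    (x : ZMod n) = (y : ZMod n) ↔ (n : ℤ) ∣ y - x := by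
  rw [ZMod.intCast_eq_intCast_iff]
  constructor
  · intro h
    exact Int.ModEq.dvd h
  · intro h
    exact Int.modEq_iff_dvd.mpr h

lemma ch_le (hX : PairwiseCompatible n X) {x v : ℤ} (h : Ch n X x v) : v - x ≤ n := by
  have := hX.1 _ h.2
  simp only [Arc.IsAdmissible] at this
  omega

lemma ch_shift (k : ℤ) {x v : ℤ} (h : Ch n X x v) : Ch n X (x + k * n) (v + k * n) := by
  obtain ⟨h2, hm⟩ := h
  refine ⟨by omega, ?_⟩
  have hc : ((x + k * n : ℤ) : ZMod n) = (x : ZMod n) := by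
    push_cast
    simp
  rw [hc]
  have : (v + k * n - (x + k * n)) = v - x := by ring
  rw [this]
  exact hm

lemma ry_shift (k : ℤ) {y : ℤ} (h : Ry n X y) : Ry n X (y + k * n) := by
  unfold Ry at *
  have hc : ((y + k * n : ℤ) : ZMod n) = (y : ZMod n) := by push_cast; simp
  rw [hc]; exact h

/-- Two chords do not cross. -/
lemma not_cross (hX : PairwiseCompatible n X) {x v y w : ℤ}
    (h1 : Ch n X x v) (h2 : Ch n X y w) :
    ¬((x < y ∧ y < v ∧ v < w) ∨ (y < x ∧ x < w ∧ w < v)) := by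
  have hc := hX.2 _ h1.2 _ h2.2
  simp only [Arc.Compatible] at hc
  intro hcr
  apply hc
  refine ⟨x, y, rfl, rfl, ?_⟩
  have e1 : x + ((v - x).toNat : ℤ) = v := by omega
  have e2 : y + ((w - y).toNat : ℤ) = w := by omega
  rw [e1, e2]
  exact hcr

/-- A ray does not cross a chord. -/
lemma not_cross_ray (hX : PairwiseCompatible n X) {x v y : ℤ}
    (h1 : Ch n X x v) (h2 : Ry n X y) : ¬(x < y ∧ y < v) := by
  have hc := hX.2 _ h1.2 _ h2
  simp only [Arc.Compatible] at hc
  intro hcr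
  apply hc
  refine ⟨x, y, rfl, rfl, hcr.1, ?_⟩
  have e1 : x + ((v - x).toNat : ℤ) = v := by omega
  rw [e1]; exact hcr.2

lemma compat_symm {a b : Arc n} (h : a.Compatible b) : b.Compatible a := by
  cases a with
  | inner i t =>
    cases b with
    | inner k s =>
      simp only [Arc.Compatible] at *
      rintro ⟨x, y, hx, hy, hc⟩
      exact h ⟨y, x, hy, hx, hc.symm⟩
    | proj j => simpa [Arc.Compatible] using h
  | proj j =>
    cases b with
    | inner k s => simpa [Arc.Compatible] using h
    | proj j' => simp [Arc.Compatible]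

lemma mem_of_compat (hX : IsTriangulation n X) (A : Arc n) (hA : A.IsAdmissible)
    (hAA : A.Compatible A) (hall : ∀ B ∈ X, A.Compatible B) : A ∈ X := by
  have hY : PairwiseCompatible n (insert A X) := by
    constructor
    · rintro a (rfl | ha)
      · exact hA
      · exact hX.1.1 _ ha
    · rintro a (rfl | ha) b (rfl | hb)
      · exact hAA
      · exact hall _ hb
      · exact compat_symm (hall _ ha)
      · exact hX.1.2 _ ha _ hb
  have := hX.2 _ hY (Set.subset_insert _ _)
  rw [← this]
  exact Set.mem_insert _ _


lemma lift_diff {x1 x : ℤ} (h : (x1 : ZMod n) = (x : ZMod n)) :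
    ∃ d : ℤ, x1 = x + d * n := by
  obtain ⟨d, hd⟩ := (intCast_eq_intCast_iff_dvd x x1).mp h.symm
  exact ⟨d, by rw [mul_comm] at hd; omega⟩

lemma ch_of_mem {k : ZMod n} {s : ℕ} (hB : Arc.inner k s ∈ X) (hs : 2 ≤ s)
    {y : ℤ} (hy : (y : ZMod n) = k) : Ch n X y (y + s) := by
  refine ⟨by omega, ?_⟩
  have e : (y + (s : ℤ) - y).toNat = s := by omega
  rw [e, hy]
  exact hB

/-- Maximality: an uncrossed ray position is a ray. -/
lemma ray_forced (hX : IsTriangulation n X) {y : ℤ} (hexp : Exp n X y) :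
    Ry n X y := by
  apply mem_of_compat hX (Arc.proj (y : ZMod n)) trivial (by simp [Arc.Compatible])
  intro B hB
  cases B with
  | inner k s =>
    simp only [Arc.Compatible]
    rintro ⟨x1, y1, hx1, hy1, hlt1, hlt2⟩
    obtain ⟨hs2, hsn⟩ := hX.1.1 _ hB
    obtain ⟨d, hd⟩ := lift_diff hy1
    have hch : Ch n X (x1 - d * n) (x1 - d * n + s) := by
      have : ((x1 - d * n : ℤ) : ZMod n) = k := by
        rw [← hx1]; push_cast; simp
      exact ch_of_mem hB hs2 this
    exact hexp _ _ hch ⟨by omega, by omega⟩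
  | proj j => simp [Arc.Compatible]

/-- Maximality: an uncrossed admissible chord position is a chord. -/
lemma chord_forced (hX : IsTriangulation n X) {x v : ℤ} (h2 : 2 ≤ v - x)
    (hvn : v - x ≤ n)
    (hlam : ∀ y w, Ch n X y w →
      ¬((x < y ∧ y < v ∧ v < w) ∨ (y < x ∧ x < w ∧ w < v)))
    (hray : ∀ y, Ry n X y → ¬(x < y ∧ y < v)) : Ch n X x v := by
  have ht : ((v - x).toNat : ℤ) = v - x := by omega
  refine ⟨h2, ?_⟩
  apply mem_of_compat hX (Arc.inner (x : ZMod n) (v - x).toNat)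
    (by constructor <;> omega)
  · simp only [Arc.Compatible]
    rintro ⟨x1, y1, hx1, hy1, hor⟩
    rw [ht] at hor
    have hdvd : (n : ℤ) ∣ y1 - x1 := by
      rw [← intCast_eq_intCast_iff_dvd, hx1, hy1]
    rcases hor with ⟨ha, hb, -⟩ | ⟨ha, hb, -⟩
    · have := Int.le_of_dvd (by omega) hdvd
      omega
    · have := Int.le_of_dvd (by omega) (dvd_neg.mpr hdvd)
      omega
  · intro B hB
    cases B with
    | inner k s =>
      simp only [Arc.Compatible]
      rintro ⟨x1, y1, hx1, hy1, hor⟩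
      rw [ht] at hor
      obtain ⟨hs2, hsn⟩ := hX.1.1 _ hB
      obtain ⟨d, hd⟩ := lift_diff hx1
      have hch : Ch n X (y1 - d * n) (y1 - d * n + s) := by
        have : ((y1 - d * n : ℤ) : ZMod n) = k := by
          rw [← hy1]; push_cast; simp
        exact ch_of_mem hB hs2 this
      refine hlam _ _ hch ?_
      rcases hor with ⟨ha, hb, hc⟩ | ⟨ha, hb, hc⟩
      · exact Or.inl ⟨by omega, by omega, by omega⟩
      · exact Or.inr ⟨by omega, by omega, by omega⟩
    | proj j =>
      simp only [Arc.Compatible]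
      rintro ⟨x1, y1, hx1, hy1, hlt1, hlt2⟩
      rw [ht] at hlt2
      obtain ⟨d, hd⟩ := lift_diff hx1
      have hry : Ry n X (y1 - d * n) := by
        unfold Ry
        have : ((y1 - d * n : ℤ) : ZMod n) = j := by
          rw [← hy1]; push_cast; simp
        rw [this]; exact hB
      exact hray _ hry ⟨by omega, by omega⟩


----------------------------------------------------------------
-- chord collections and tree counting
----------------------------------------------------------------

noncomputable def chordsIn (n : ℕ) (X : Set (Arc n)) (u v : ℤ) : Finset (ℤ × ℤ) :=
  ((Finset.Icc u v) ×ˢ (Finset.Icc u v)).filter (fun p => Ch n X p.1 p.2)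

lemma mem_chordsIn {u v d1 d2 : ℤ} :
    (d1, d2) ∈ chordsIn n X u v ↔ u ≤ d1 ∧ d2 ≤ v ∧ Ch n X d1 d2 := by
  simp only [chordsIn, mem_filter, mem_product, mem_Icc]
  constructor
  · rintro ⟨⟨⟨a1, a2⟩, a3, a4⟩, a5⟩
    exact ⟨a1, a4, a5⟩
  · rintro ⟨a1, a2, a3⟩
    have := a3.1
    exact ⟨⟨⟨a1, by omega⟩, by omega, a2⟩, a3⟩

lemma chordsIn_of_le {u v : ℤ} (h : v ≤ u + 1) : chordsIn n X u v = ∅ := by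
  ext ⟨d1, d2⟩
  simp only [mem_chordsIn, Finset.notMem_empty, iff_false]
  rintro ⟨a1, a2, a3⟩
  have := a3.1
  omega

lemma chordsIn_mono {u v u' v' : ℤ} (h1 : u' ≤ u) (h2 : v ≤ v') :
    chordsIn n X u v ⊆ chordsIn n X u' v' := by
  rintro ⟨d1, d2⟩ hm
  rw [mem_chordsIn] at *
  exact ⟨by omega, by omega, hm.2.2⟩

/-- The splitting point under a chord: exactly two children. -/
lemma split (hX : IsTriangulation n X) {u v : ℤ} (huv : Ch n X u v)
    (h3 : 3 ≤ v - u) :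
    ∃ m : ℤ, u < m ∧ m < v ∧ (Ch n X u m ∨ m = u + 1) ∧ (Ch n X m v ∨ m = v - 1) ∧
      (∀ w, u < w → w < v → Ch n X u w → w ≤ m) := by
  have hne : ((Finset.Icc (u+1) (v-1)).filter (fun w => w = u + 1 ∨ Ch n X u w)).Nonempty := by
    refine ⟨u + 1, ?_⟩
    rw [mem_filter, mem_Icc]
    exact ⟨⟨le_refl _, by omega⟩, Or.inl rfl⟩
  obtain ⟨m, hmF, hmaxF⟩ : ∃ m ∈ (Finset.Icc (u+1) (v-1)).filter
      (fun w => w = u + 1 ∨ Ch n X u w), ∀ w ∈ (Finset.Icc (u+1) (v-1)).filter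
      (fun w => w = u + 1 ∨ Ch n X u w), w ≤ m :=
    ⟨_, Finset.max'_mem _ hne, fun w hw => Finset.le_max' _ w hw⟩
  rw [mem_filter, mem_Icc] at hmF
  obtain ⟨⟨hm1, hm2⟩, hc1⟩ := hmF
  have hmax : ∀ w, u < w → w < v → Ch n X u w → w ≤ m := by
    intro w hw1 hw2 hw3
    apply hmaxF w
    rw [mem_filter, mem_Icc]
    exact ⟨⟨by omega, by omega⟩, Or.inr hw3⟩
  refine ⟨m, by omega, by omega, Or.symm hc1, ?_, hmax⟩
  by_cases hmv : m = v - 1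
  · exact Or.inr hmv
  · left
    have hvm2 : m ≤ v - 2 := by omega
    apply chord_forced hX (by omega) (by have := ch_le hX.1 huv; omega)
    · intro y w hyw
      rintro (⟨h1, h2, h3'⟩ | ⟨h1, h2, h3'⟩)
      · exact not_cross hX.1 huv hyw (Or.inl ⟨by omega, h2, h3'⟩)
      · rcases lt_trichotomy y u with hyu | hyu | hyu
        · exact not_cross hX.1 hyw huv (Or.inl ⟨hyu, by omega, h3'⟩)
        · subst hyu
          have := hmax w (by omega) h3' hyw
          omega
        · rcases hc1 with hg | hch
          · omega
          · exact not_cross hX.1 hch hyw (Or.inl ⟨hyu, h1, h2⟩)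
    · intro y hy
      rintro ⟨h1, h2⟩
      exact not_cross_ray hX.1 huv hy ⟨by omega, h2⟩

/-- Decomposition of the chords under a chord along the split. -/
lemma decomp (hX : IsTriangulation n X) {u v : ℤ} (huv : Ch n X u v)
    (h3 : 3 ≤ v - u) :
    ∃ m : ℤ, u < m ∧ m < v ∧ (Ch n X u m ∨ m = u + 1) ∧ (Ch n X m v ∨ m = v - 1) ∧
      chordsIn n X u v = insert (u, v) (chordsIn n X u m ∪ chordsIn n X m v) := by
  obtain ⟨m, h1, h2, c1, c2, hmax⟩ := split hX huv h3
  refine ⟨m, h1, h2, c1, c2, ?_⟩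
  ext ⟨d1, d2⟩
  simp only [Finset.mem_insert, Finset.mem_union, mem_chordsIn, Prod.mk.injEq]
  constructor
  · rintro ⟨a1, a2, a3⟩
    by_cases hd2 : d2 ≤ m
    · exact Or.inr (Or.inl ⟨a1, hd2, a3⟩)
    · by_cases hd1 : m ≤ d1
      · exact Or.inr (Or.inr ⟨hd1, a2, a3⟩)
      · left
        push_neg at hd1 hd2
        have hd1u : d1 = u := by
          by_contra hne
          have : u < d1 := by omega
          rcases c1 with hch | hg
          · exact not_cross hX.1 hch a3 (Or.inl ⟨this, hd1, hd2⟩)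
          · omega
        subst hd1u
        have hd2v : d2 = v := by
          by_contra hne
          have : d2 < v := by omega
          have := hmax d2 (by have := a3.1; omega) this a3
          omega
        exact ⟨rfl, hd2v⟩
  · rintro (⟨rfl, rfl⟩ | ⟨a1, a2, a3⟩ | ⟨a1, a2, a3⟩)
    · exact ⟨le_refl _, le_refl _, huv⟩
    · exact ⟨a1, by omega, a3⟩
    · exact ⟨by omega, a2, a3⟩

lemma decomp_card {u v m : ℤ} (h1 : u < m) (h2 : m < v)
    (hdec : chordsIn n X u v = insert (u, v) (chordsIn n X u m ∪ chordsIn n X m v)) :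
    (chordsIn n X u v).card =
      1 + (chordsIn n X u m).card + (chordsIn n X m v).card := by
  have hdisj : Disjoint (chordsIn n X u m) (chordsIn n X m v) := by
    rw [Finset.disjoint_left]
    rintro ⟨d1, d2⟩ ha hb
    rw [mem_chordsIn] at ha hb
    have := ha.2.2.1
    omega
  have hnm : (u, v) ∉ chordsIn n X u m ∪ chordsIn n X m v := by
    rw [Finset.mem_union, mem_chordsIn, mem_chordsIn]
    rintro (⟨-, hbad, -⟩ | ⟨hbad, -, -⟩) <;> omega
  rw [hdec, Finset.card_insert_of_notMem hnm, Finset.card_union_of_disjoint hdisj]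
  ring

/-- Exact count of chords below a chord. -/
lemma chordsIn_card (hX : IsTriangulation n X) :
    ∀ t : ℕ, ∀ u v : ℤ, Ch n X u v → v - u ≤ t →
      (chordsIn n X u v).card = (v - u - 1).toNat := by
  intro t
  induction t with
  | zero => intro u v huv hle; have := huv.1; omega
  | succ t IH =>
    intro u v huv hle
    by_cases h3 : v - u ≤ 2
    · have hv : v = u + 2 := by have := huv.1; omega
      subst hv
      have : chordsIn n X u (u + 2) = {(u, u + 2)} := by
        ext ⟨d1, d2⟩
        simp only [mem_chordsIn, Finset.mem_singleton, Prod.mk.injEq]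
        constructor
        · rintro ⟨a1, a2, a3⟩
          have := a3.1
          omega
        · rintro ⟨rfl, rfl⟩
          exact ⟨le_refl _, le_refl _, huv⟩
      rw [this, Finset.card_singleton]
      omega
    · obtain ⟨m, h1, h2, c1, c2, hdec⟩ := decomp hX huv (by omega)
      rw [decomp_card h1 h2 hdec]
      have e1 : (chordsIn n X u m).card = (m - u - 1).toNat := by
        rcases c1 with hch | hg
        · exact IH u m hch (by omega)
        · rw [chordsIn_of_le (by omega)]; simp; omega
      have e2 : (chordsIn n X m v).card = (v - m - 1).toNat := by
        rcases c2 with hch | hg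
        · exact IH m v hch (by omega)
        · rw [chordsIn_of_le (by omega)]; simp; omega
      rw [e1, e2]
      omega

/-- Lower bound: chords below a chord with right endpoint beyond `p`. -/
lemma chordsIn_lower (hX : IsTriangulation n X) :
    ∀ t : ℕ, ∀ u v p : ℤ, Ch n X u v → v - u ≤ t → u ≤ p → p < v →
      (v - p - 1).toNat ≤ ((chordsIn n X u v).filter (fun q => p < q.2)).card := by
  intro t
  induction t with
  | zero => intro u v p huv hle; have := huv.1; omega
  | succ t IH =>
    intro u v p huv hle hp1 hp2
    have hmm : (u, v) ∈ (chordsIn n X u v).filter (fun q => p < q.2) := by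
      rw [mem_filter, mem_chordsIn]
      exact ⟨⟨le_refl _, le_refl _, huv⟩, hp2⟩
    by_cases h3 : v - u ≤ 2
    · have h1 : 1 ≤ ((chordsIn n X u v).filter (fun q => p < q.2)).card :=
        Finset.card_pos.mpr ⟨_, hmm⟩
      omega
    · obtain ⟨m, h1, h2, c1, c2, hdec⟩ := decomp hX huv (by omega)
      by_cases hpm : p < m
      · -- include (u,v), filtered left subtree, whole right subtree
        have hsub : insert (u, v)
            (((chordsIn n X u m).filter (fun q => p < q.2)) ∪ chordsIn n X m v)
            ⊆ (chordsIn n X u v).filter (fun q => p < q.2) := by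
          intro a ha
          rw [Finset.mem_insert, Finset.mem_union] at ha
          rcases ha with rfl | ha | ha
          · exact hmm
          · rw [mem_filter] at ha ⊢
            exact ⟨chordsIn_mono (le_refl _) (by omega) ha.1, ha.2⟩
          · rw [mem_filter]
            obtain ⟨d1, d2⟩ := a
            rw [mem_chordsIn] at ha ⊢
            have := ha.2.2.1
            exact ⟨⟨by omega, ha.2.1, ha.2.2⟩, by omega⟩
        have hcard : ((chordsIn n X u m).filter (fun q => p < q.2)).card
            + (chordsIn n X m v).card + 1 ≤
            ((chordsIn n X u v).filter (fun q => p < q.2)).card := by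
          have hdisj : Disjoint ((chordsIn n X u m).filter (fun q => p < q.2))
              (chordsIn n X m v) := by
            rw [Finset.disjoint_left]
            rintro ⟨d1, d2⟩ ha hb
            rw [mem_filter, mem_chordsIn] at ha
            rw [mem_chordsIn] at hb
            have := hb.2.2.1
            omega
          have hnm : (u, v) ∉
              ((chordsIn n X u m).filter (fun q => p < q.2)) ∪ chordsIn n X m v := by
            rw [Finset.mem_union, mem_filter, mem_chordsIn, mem_chordsIn]
            rintro (⟨⟨-, hbad, -⟩, -⟩ | ⟨hbad, -, -⟩) <;> omega
          calc ((chordsIn n X u m).filter (fun q => p < q.2)).card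
              + (chordsIn n X m v).card + 1
              = (insert (u, v)
                  (((chordsIn n X u m).filter (fun q => p < q.2)) ∪ chordsIn n X m v)).card := by
                rw [Finset.card_insert_of_notMem hnm, Finset.card_union_of_disjoint hdisj]
            _ ≤ _ := Finset.card_le_card hsub
        have e2 : (chordsIn n X m v).card = (v - m - 1).toNat := by
          rcases c2 with hch | hg
          · exact chordsIn_card hX (v - m).toNat m v hch (by omega)
          · rw [chordsIn_of_le (by omega)]; simp; omega
        have e1 : (m - p - 1).toNat ≤
            ((chordsIn n X u m).filter (fun q => p < q.2)).card := by
          rcases c1 with hch | hg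
          · exact IH u m p hch (by omega) hp1 hpm
          · omega
        omega
      · -- p ≥ m : include (u,v) and filtered right subtree
        have hsub : insert (u, v) ((chordsIn n X m v).filter (fun q => p < q.2))
            ⊆ (chordsIn n X u v).filter (fun q => p < q.2) := by
          intro a ha
          rw [Finset.mem_insert] at ha
          rcases ha with rfl | ha
          · exact hmm
          · rw [mem_filter] at ha ⊢
            exact ⟨chordsIn_mono (by omega) (le_refl _) ha.1, ha.2⟩
        have hnm : (u, v) ∉ (chordsIn n X m v).filter (fun q => p < q.2) := by
          rw [mem_filter, mem_chordsIn]
          rintro ⟨⟨hbad, -, -⟩, -⟩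
          omega
        have hcard : ((chordsIn n X m v).filter (fun q => p < q.2)).card + 1 ≤
            ((chordsIn n X u v).filter (fun q => p < q.2)).card := by
          calc ((chordsIn n X m v).filter (fun q => p < q.2)).card + 1
              = (insert (u, v) ((chordsIn n X m v).filter (fun q => p < q.2))).card := by
                rw [Finset.card_insert_of_notMem hnm]
            _ ≤ _ := Finset.card_le_card hsub
        have e1 : (v - p - 1).toNat ≤ 1 + ((chordsIn n X m v).filter (fun q => p < q.2)).card := by
          rcases c2 with hch | hg
          · have := IH m v p hch (by omega) (by omega) hp2
            omega
          · omega
        omega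

/-- Upper bound: chords in a prefix of a chord. -/
lemma chordsIn_upper (hX : IsTriangulation n X) :
    ∀ t : ℕ, ∀ u v p : ℤ, Ch n X u v → v - u ≤ t → u ≤ p → p < v →
      (chordsIn n X u p).card ≤ (p - u - 1).toNat := by
  intro t
  induction t with
  | zero => intro u v p huv hle; have := huv.1; omega
  | succ t IH =>
    intro u v p huv hle hp1 hp2
    by_cases h3 : v - u ≤ 2
    · have hp : p ≤ u + 1 := by omega
      rw [chordsIn_of_le hp]
      simp
    · obtain ⟨m, h1, h2, c1, c2, hdec⟩ := decomp hX huv (by omega)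
      by_cases hpm : p ≤ m
      · rcases c1 with hch | hg
        · rcases eq_or_lt_of_le hpm with rfl | hlt
          · rw [chordsIn_card hX (p - u).toNat u p hch (by omega)]
          · exact IH u m p hch (by omega) hp1 hlt
        · rw [chordsIn_of_le (by omega)]
          simp
      · push_neg at hpm
        have hsub : chordsIn n X u p ⊆ chordsIn n X u m ∪ chordsIn n X m p := by
          rintro ⟨d1, d2⟩ hd
          rw [mem_chordsIn] at hd
          have hdv : (d1, d2) ∈ chordsIn n X u v := by
            rw [mem_chordsIn]
            exact ⟨hd.1, by omega, hd.2.2⟩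
          rw [hdec, Finset.mem_insert, Finset.mem_union] at hdv
          rw [Finset.mem_union, mem_chordsIn, mem_chordsIn]
          rcases hdv with heq | hm | hm
          · exfalso
            obtain ⟨h1', h2'⟩ := Prod.ext_iff.mp heq
            simp only at h1' h2'
            omega
          · rw [mem_chordsIn] at hm
            exact Or.inl hm
          · rw [mem_chordsIn] at hm
            exact Or.inr ⟨hm.1, hd.2.1, hm.2.2⟩
        have hcard := Finset.card_le_card hsub
        have hcard2 := Finset.card_union_le (chordsIn n X u m) (chordsIn n X m p)
        have e1 : (chordsIn n X u m).card ≤ (m - u - 1).toNat := by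
          rcases c1 with hch | hg
          · rw [chordsIn_card hX (m - u).toNat u m hch (by omega)]
          · rw [chordsIn_of_le (by omega)]; simp
        have e2 : (chordsIn n X m p).card ≤ (p - m - 1).toNat := by
          rcases c2 with hch | hg
          · exact IH m v p hch (by omega) (by omega) hp2
          · omega
        omega


----------------------------------------------------------------
-- exposed points, rays, and the counting of arcs per period
----------------------------------------------------------------

noncomputable def endF (n : ℕ) (X : Set (Arc n)) (m : ℤ) : Finset ℤ :=
  (Finset.Icc (m - n) (m - 2)).filter (fun y => Ch n X y m)

noncomputable def rayv (n : ℕ) (X : Set (Arc n)) (y : ℤ) : ℤ :=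
  if Ry n X y then 1 else 0

def Av (n : ℕ) (a : ZMod n → ℕ) (m : ℤ) : ℤ := (a ((m : ℤ) : ZMod n) : ℤ)

lemma mem_endF (hpc : PairwiseCompatible n X) {m y : ℤ} :
    y ∈ endF n X m ↔ Ch n X y m := by
  rw [endF, mem_filter, mem_Icc]
  constructor
  · rintro ⟨-, h⟩; exact h
  · intro h
    have h1 := h.1
    have h2 := ch_le hpc h
    exact ⟨⟨by omega, by omega⟩, h⟩

lemma rayv_nonneg {y : ℤ} : 0 ≤ rayv n X y := by
  rw [rayv]; split <;> omega

lemma ray_exp (hpc : PairwiseCompatible n X) {y : ℤ} (h : Ry n X y) : Exp n X y := by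
  intro x v hch hlt
  exact not_cross_ray hpc hch h hlt

lemma exp_shift (k : ℤ) {y : ℤ} (h : Exp n X y) : Exp n X (y + k * n) := by
  intro x v hch hlt
  have h2 := ch_shift (-k) hch
  have e : (-k) * (n : ℤ) = -(k * n) := by ring
  rw [e] at h2
  exact h _ _ h2 ⟨by omega, by omega⟩

lemma exp_exists (hX : IsTriangulation n X) (hn : 0 < n) : ∃ y, Exp n X y := by
  by_cases hch : ∃ x v, Ch n X x v
  · obtain ⟨x0, v0, h0⟩ := hch
    have hne : ((Finset.Icc 2 n).filter (fun t : ℕ => ∃ x, Ch n X x (x + t))).Nonempty := by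
      refine ⟨(v0 - x0).toNat, ?_⟩
      rw [mem_filter, mem_Icc]
      have h1 := h0.1
      have h2 := ch_le hX.1 h0
      refine ⟨⟨by omega, by omega⟩, x0, ?_⟩
      have : x0 + ((v0 - x0).toNat : ℤ) = v0 := by omega
      rw [this]; exact h0
    obtain ⟨tm, htmF, htmax⟩ : ∃ tm ∈ (Finset.Icc 2 n).filter
        (fun t : ℕ => ∃ x, Ch n X x (x + t)), ∀ w ∈ (Finset.Icc 2 n).filter
        (fun t : ℕ => ∃ x, Ch n X x (x + t)), w ≤ tm :=
      ⟨_, Finset.max'_mem _ hne, fun w hw => Finset.le_max' _ w hw⟩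
    rw [mem_filter, mem_Icc] at htmF
    obtain ⟨⟨ht2, htn⟩, x1, hx1⟩ := htmF
    refine ⟨x1, ?_⟩
    intro x v hch' hlt
    have hnc := not_cross hX.1 hch' hx1
    have hge : x1 + (tm : ℤ) ≤ v := by
      by_contra hcon
      exact hnc (Or.inl ⟨hlt.1, by omega, by omega⟩)
    have hmem : (v - x).toNat ∈ (Finset.Icc 2 n).filter
        (fun t : ℕ => ∃ x, Ch n X x (x + t)) := by
      rw [mem_filter, mem_Icc]
      have h1 := hch'.1
      have h2 := ch_le hX.1 hch'
      refine ⟨⟨by omega, by omega⟩, x, ?_⟩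
      have : x + ((v - x).toNat : ℤ) = v := by omega
      rw [this]; exact hch'
    have := htmax _ hmem
    omega
  · exact ⟨0, fun x v hcv _ => hch ⟨x, v, hcv⟩⟩

/-- The chord between consecutive exposed vertices. -/
lemma consec_ch (hX : IsTriangulation n X) (hn : 0 < n) {u v : ℤ}
    (hu : Exp n X u) (hv : Exp n X v) (huv : u < v)
    (hno : ∀ z, u < z → z < v → ¬Exp n X z) (h2 : 2 ≤ v - u) : Ch n X u v := by
  have hvu : v ≤ u + n := by
    by_contra hcon
    exact hno (u + n) (by omega) (by omega) (by simpa using exp_shift 1 hu)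
  apply chord_forced hX h2 (by omega)
  · intro y w hyw
    rintro (⟨a, b, c⟩ | ⟨a, b, c⟩)
    · exact hv _ _ hyw ⟨b, c⟩
    · exact hu _ _ hyw ⟨a, b⟩
  · intro y hy hlt
    exact hno y hlt.1 hlt.2 (ray_exp hX.1 hy)

lemma prev_exp {j : ℤ} (hn : 0 < n) (hj : Exp n X j) :
    ∃ y, Exp n X y ∧ j - n ≤ y ∧ y < j ∧ ∀ z, y < z → z < j → ¬Exp n X z := by
  have hne : ((Finset.Icc (j - n) (j - 1)).filter (Exp n X)).Nonempty := by
    refine ⟨j - n, ?_⟩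
    rw [mem_filter, mem_Icc]
    have h2 := exp_shift (-1) hj
    have e : j + (-1) * (n : ℤ) = j - n := by ring
    rw [e] at h2
    exact ⟨⟨le_refl _, by omega⟩, h2⟩
  obtain ⟨y, hyF, hymax⟩ : ∃ y ∈ (Finset.Icc (j - n) (j - 1)).filter (Exp n X),
      ∀ w ∈ (Finset.Icc (j - n) (j - 1)).filter (Exp n X), w ≤ y :=
    ⟨_, Finset.max'_mem _ hne, fun w hw => Finset.le_max' _ w hw⟩
  rw [mem_filter, mem_Icc] at hyF
  refine ⟨y, hyF.2, hyF.1.1, by omega, ?_⟩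
  intro z h1 h2 hz
  have : z ≤ y := by
    apply hymax
    rw [mem_filter, mem_Icc]
    exact ⟨⟨by omega, by omega⟩, hz⟩
  omega

lemma Av_top (hpc : PairwiseCompatible n X) (hn : 0 < n) (m : ℤ) :
    Av n (topSeq n X) m = (endF n X m).card + rayv n X m := by
  classical
  set B : Finset (Arc n) :=
    (endF n X m).image (fun y : ℤ => Arc.inner (y : ZMod n) ((m - y).toNat)) ∪
      (if Ry n X m then {Arc.proj (m : ZMod n)} else ∅) with hB
  have hset : {arc | arc ∈ X ∧ Arc.terminal arc = ((m : ℤ) : ZMod n)} = ↑B := by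
    ext a
    simp only [Set.mem_setOf_eq, hB, Finset.coe_union, Set.mem_union, Finset.coe_image,
      Set.mem_image, Finset.mem_coe]
    constructor
    · rintro ⟨haX, hterm⟩
      cases a with
      | inner i t =>
        obtain ⟨ht2, htn⟩ := hpc.1 _ haX
        left
        refine ⟨m - t, ?_, ?_⟩
        · rw [mem_endF hpc]
          refine ⟨by omega, ?_⟩
          have e1 : (m - (m - (t : ℤ))).toNat = t := by omega
          have e2 : ((m - (t : ℤ) : ℤ) : ZMod n) = i := by
            have : Arc.terminal (Arc.inner i t) = i + (t : ZMod n) := rfl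
            rw [this] at hterm
            push_cast
            rw [← hterm]
            ring
          rw [e1, e2]
          exact haX
        · have e1 : (m - (m - (t : ℤ))).toNat = t := by omega
          have e2 : ((m - (t : ℤ) : ℤ) : ZMod n) = i := by
            have : Arc.terminal (Arc.inner i t) = i + (t : ZMod n) := rfl
            rw [this] at hterm
            push_cast
            rw [← hterm]
            ring
          rw [e1, e2]
      | proj c =>
        right
        have : c = ((m : ℤ) : ZMod n) := hterm
        rw [this] at haX
        rw [if_pos (show Ry n X m from haX)]
        simp [this]
    · rintro (⟨y, hy, rfl⟩ | hproj)
      · rw [mem_endF hpc] at hy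
        have h2 := hy.1
        refine ⟨hy.2, ?_⟩
        show (y : ZMod n) + (((m - y).toNat : ℕ) : ZMod n) = ((m : ℤ) : ZMod n)
        have e : (((m - y).toNat : ℕ) : ZMod n) = ((m - y : ℤ) : ZMod n) := by
          rw [← Int.cast_natCast]
          congr 1
          omega
        rw [e]
        push_cast
        ring
      · by_cases hR : Ry n X m
        · rw [if_pos hR] at hproj
          simp only [Finset.mem_singleton] at hproj
          subst hproj
          exact ⟨hR, rfl⟩
        · rw [if_neg hR] at hproj
          simp at hproj
  have hcalc : topSeq n X ((m : ℤ) : ZMod n) = B.card := by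
    rw [topSeq, hset, Set.ncard_coe_finset]
  have hcard : B.card = (endF n X m).card + (if Ry n X m then 1 else 0) := by
    rw [hB]
    rw [Finset.card_union_of_disjoint]
    · congr 1
      · apply Finset.card_image_of_injOn
        intro y1 h1 y2 h2 heq
        simp only [Arc.inner.injEq] at heq
        rw [Finset.mem_coe, mem_endF hpc] at h1 h2
        have := h1.1
        have := h2.1
        omega
      · split <;> simp
    · rw [Finset.disjoint_left]
      intro a ha hb
      simp only [Finset.mem_image] at ha
      obtain ⟨y, -, rfl⟩ := ha
      split at hb <;> simp_all
  rw [Av, hcalc, hcard, rayv]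
  push_cast
  split <;> simp


lemma sum_Ioc_cons (f : ℤ → ℤ) {a b c : ℤ} (h1 : a ≤ b) (h2 : b ≤ c) :
    (∑ i ∈ Finset.Ioc a b, f i) + ∑ i ∈ Finset.Ioc b c, f i = ∑ i ∈ Finset.Ioc a c, f i := by
  have hd : Disjoint (Finset.Ioc a b) (Finset.Ioc b c) := by
    rw [Finset.disjoint_left]
    intro z hz1 hz2
    rw [Finset.mem_Ioc] at hz1 hz2
    omega
  rw [← Finset.sum_union hd, Finset.Ioc_union_Ioc_eq_Ioc h1 h2]

noncomputable def endPairs (n : ℕ) (X : Set (Arc n)) (x k : ℤ) : Finset (ℤ × ℤ) :=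
  (Finset.Ioc x k).biUnion (fun m => (endF n X m).image (fun y => (y, m)))

lemma card_endPairs (x k : ℤ) :
    (endPairs n X x k).card = ∑ m ∈ Finset.Ioc x k, (endF n X m).card := by
  rw [endPairs, Finset.card_biUnion]
  · apply Finset.sum_congr rfl
    intro m hm
    apply Finset.card_image_of_injective
    intro a b hab
    simpa using hab
  · intro i hi j hj hij
    rw [Function.onFun, Finset.disjoint_left]
    rintro ⟨y, m⟩ ha hb
    simp only [Finset.mem_image] at ha hb
    obtain ⟨y1, hy1, heq1⟩ := ha
    obtain ⟨y2, hy2, heq2⟩ := hb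
    apply hij
    have e1 : m = i := congrArg Prod.snd heq1.symm
    have e2 : m = j := congrArg Prod.snd heq2.symm
    omega

lemma mem_endPairs (hpc : PairwiseCompatible n X) {x k d1 d2 : ℤ} :
    (d1, d2) ∈ endPairs n X x k ↔ (x < d2 ∧ d2 ≤ k) ∧ Ch n X d1 d2 := by
  rw [endPairs, Finset.mem_biUnion]
  constructor
  · rintro ⟨m, hm, hmem⟩
    simp only [Finset.mem_image] at hmem
    obtain ⟨y, hy, heq⟩ := hmem
    obtain ⟨rfl, rfl⟩ : y = d1 ∧ m = d2 := by
      constructor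
      · exact congrArg Prod.fst heq
      · exact congrArg Prod.snd heq
    rw [Finset.mem_Ioc] at hm
    rw [mem_endF hpc] at hy
    exact ⟨hm, hy⟩
  · rintro ⟨hm, hch⟩
    refine ⟨d2, Finset.mem_Ioc.mpr hm, ?_⟩
    simp only [Finset.mem_image]
    exact ⟨d1, (mem_endF hpc).mpr hch, rfl⟩

lemma endPairs_eq_chordsIn (hpc : PairwiseCompatible n X) {x k : ℤ}
    (hside : ∀ d1 d2, x < d2 → d2 ≤ k → Ch n X d1 d2 → x ≤ d1) :
    endPairs n X x k = chordsIn n X x k := by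
  ext ⟨d1, d2⟩
  rw [mem_endPairs hpc, mem_chordsIn]
  constructor
  · rintro ⟨⟨h1, h2⟩, hch⟩
    exact ⟨hside _ _ h1 h2 hch, h2, hch⟩
  · rintro ⟨h1, h2, hch⟩
    have := hch.1
    exact ⟨⟨by omega, h2⟩, hch⟩

lemma sum_Av_split (hpc : PairwiseCompatible n X) (hn : 0 < n) (x k : ℤ) :
    ∑ m ∈ Finset.Ioc x k, Av n (topSeq n X) m =
      ((∑ m ∈ Finset.Ioc x k, (endF n X m).card : ℕ) : ℤ) +
        ∑ m ∈ Finset.Ioc x k, rayv n X m := by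
  rw [Nat.cast_sum, ← Finset.sum_add_distrib]
  apply Finset.sum_congr rfl
  intro m hm
  exact Av_top hpc hn m

lemma Ioc_succ_singleton (p : ℤ) : Finset.Ioc p (p + 1) = {p + 1} := by
  ext z
  simp only [Finset.mem_Ioc, Finset.mem_singleton]
  omega

/-- Between an exposed point and anything to its left there are many arcs. -/
lemma lower (hX : IsTriangulation n X) (hn : 0 < n) :
    ∀ d : ℕ, ∀ j k : ℤ, Exp n X j → k < j → j - k ≤ d →
      j - k ≤ ∑ m ∈ Finset.Ioc k j, Av n (topSeq n X) m := by
  intro d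
  induction d with
  | zero => intro j k _ h1 h2; omega
  | succ d IH =>
    intro j k hj hkj hd
    obtain ⟨y, hy, hy1, hy2, hyno⟩ := prev_exp hn hj
    by_cases hk : k < y
    · have s1 := IH y k hy hk (by omega)
      have s2 := IH j y hj hy2 (by omega)
      have := sum_Ioc_cons (Av n (topSeq n X)) hk.le hy2.le
      omega
    · push_neg at hk
      have hrayj : rayv n X j = 1 := by
        rw [rayv, if_pos (ray_forced hX hj)]
      have hRsum : 1 ≤ ∑ m ∈ Finset.Ioc k j, rayv n X m := by
        have := Finset.single_le_sum (f := rayv n X)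
          (fun i _ => rayv_nonneg) (Finset.mem_Ioc.mpr ⟨hkj, le_refl j⟩)
        omega
      have hEsum : j - k - 1 ≤ ((∑ m ∈ Finset.Ioc k j, (endF n X m).card : ℕ) : ℤ) := by
        by_cases hconn : j = y + 1
        · have : k = y := by omega
          subst this
          subst hconn
          omega
        · have hch : Ch n X y j := consec_ch hX hn hy hj hy2 hyno (by omega)
          have hlow := chordsIn_lower hX (j - y).toNat y j k hch (by omega) hk hkj
          have hsub : (chordsIn n X y j).filter (fun q => k < q.2) ⊆
              endPairs n X k j := by
            rintro ⟨d1, d2⟩ hq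
            rw [mem_filter, mem_chordsIn] at hq
            rw [mem_endPairs hX.1]
            exact ⟨⟨hq.2, hq.1.2.1⟩, hq.1.2.2⟩
          have hcc := Finset.card_le_card hsub
          rw [card_endPairs] at hcc
          omega
      have := sum_Av_split hX.1 hn k j
      omega

/-- Exact count between consecutive exposed vertices. -/
lemma blocks (hX : IsTriangulation n X) (hn : 0 < n) :
    ∀ d : ℕ, ∀ u v : ℤ, Exp n X u → Exp n X v → u < v → v - u ≤ d →
      ∑ m ∈ Finset.Ioc u v, Av n (topSeq n X) m = v - u := by
  intro d
  induction d with
  | zero => intro u v _ _ h1 h2; omega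
  | succ d IH =>
    intro u v hu hv huv hd
    by_cases hmid : ∃ z, u < z ∧ z < v ∧ Exp n X z
    · obtain ⟨z, h1, h2, h3⟩ := hmid
      have s1 := IH u z hu h3 h1 (by omega)
      have s2 := IH z v h3 hv h2 (by omega)
      have := sum_Ioc_cons (Av n (topSeq n X)) h1.le h2.le
      omega
    · push_neg at hmid
      have hno : ∀ z, u < z → z < v → ¬Exp n X z := fun z h1 h2 hz => hmid z h1 h2 hz
      have hvu : v ≤ u + n := by
        by_contra hcon
        exact hno (u + n) (by omega) (by omega) (by simpa using exp_shift 1 hu)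
      have hrayv : rayv n X v = 1 := by
        rw [rayv, if_pos (ray_forced hX hv)]
      by_cases h2 : v = u + 1
      · subst h2
        rw [Ioc_succ_singleton, Finset.sum_singleton, Av_top hX.1 hn]
        have hend : endF n X (u + 1) = ∅ := by
          ext y
          rw [mem_endF hX.1]
          simp only [Finset.notMem_empty, iff_false]
          intro hch
          have h1 := hch.1
          exact hu _ _ hch ⟨by omega, by omega⟩
        rw [hend, hrayv]
        simp
      · have hch : Ch n X u v := consec_ch hX hn hu hv huv hno (by omega)
        rw [sum_Av_split hX.1 hn]
        have hside : ∀ d1 d2, u < d2 → d2 ≤ v → Ch n X d1 d2 → u ≤ d1 := by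
          intro d1 d2 ha hb hcc
          by_contra hcon
          exact hu _ _ hcc ⟨by omega, by omega⟩
        have hE : ∑ m ∈ Finset.Ioc u v, (endF n X m).card =
            (v - u - 1).toNat := by
          rw [← card_endPairs, endPairs_eq_chordsIn hX.1 hside,
            chordsIn_card hX (v - u).toNat u v hch (by omega)]
        have hR : ∑ m ∈ Finset.Ioc u v, rayv n X m = 1 := by
          rw [Finset.sum_eq_single_of_mem v (Finset.mem_Ioc.mpr ⟨huv, le_refl v⟩)]
          · exact hrayv
          · intro b hb hne
            rw [Finset.mem_Ioc] at hb
            rw [rayv, if_neg]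
            intro hry
            exact hno b hb.1 (by omega) (ray_exp hX.1 hry)
        rw [hE, hR]
        omega

lemma Av_period (a : ZMod n → ℕ) (m : ℤ) : Av n a (m + n) = Av n a m := by
  rw [Av, Av]
  congr 1
  push_cast
  simp

lemma window_shift (hn : 0 < n) (a : ZMod n → ℕ) (p : ℤ) :
    ∑ m ∈ Finset.Ioc (p + 1) (p + 1 + n), Av n a m =
      ∑ m ∈ Finset.Ioc p (p + n), Av n a m := by
  have h1 := sum_Ioc_cons (Av n a)
    (show p ≤ p + 1 by omega) (show p + 1 ≤ p + (n : ℤ) by omega)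
  have h2 := sum_Ioc_cons (Av n a)
    (show p + 1 ≤ p + (n : ℤ) by omega) (show p + (n : ℤ) ≤ p + 1 + n by omega)
  have e1 : ∑ m ∈ Finset.Ioc p (p + 1), Av n a m = Av n a (p + 1) := by
    rw [Ioc_succ_singleton, Finset.sum_singleton]
  have e2 : ∑ m ∈ Finset.Ioc (p + n) (p + 1 + n), Av n a m = Av n a (p + 1) := by
    have : p + 1 + (n : ℤ) = (p + n) + 1 := by ring
    rw [this, Ioc_succ_singleton, Finset.sum_singleton]
    have : (p + (n : ℤ)) + 1 = (p + 1) + n := by ring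
    rw [this, Av_period]
  omega

/-- Every window of length `n` contains exactly `n` arc-terminals. -/
lemma window (hX : IsTriangulation n X) (hn : 0 < n) (p : ℤ) :
    ∑ m ∈ Finset.Ioc p (p + n), Av n (topSeq n X) m = n := by
  obtain ⟨y, hy⟩ := exp_exists hX hn
  have hyn : Exp n X (y + n) := by simpa using exp_shift 1 hy
  have hbase : ∑ m ∈ Finset.Ioc y (y + n), Av n (topSeq n X) m = n := by
    have := blocks hX hn n y (y + n) hy hyn (by omega) (by omega)
    omega
  have hup : ∀ d : ℕ, ∑ m ∈ Finset.Ioc (y + d) (y + d + n), Av n (topSeq n X) m = n := by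
    intro d
    induction d with
    | zero => simpa using hbase
    | succ d IHd =>
      have := window_shift hn (topSeq n X) (y + d)
      have e : y + (d + 1 : ℕ) = y + d + 1 := by push_cast; ring
      rw [e]
      omega
  have hdown : ∀ d : ℕ, ∑ m ∈ Finset.Ioc (y - d) (y - d + n), Av n (topSeq n X) m = n := by
    intro d
    induction d with
    | zero => simpa using hbase
    | succ d IHd =>
      have := window_shift hn (topSeq n X) (y - (d + 1 : ℕ))
      have e : y - (d + 1 : ℕ) + 1 = y - d := by push_cast; ring
      rw [e] at this
      omega
  rcases le_or_gt y p with hyp | hyp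
  · have e : p = y + ((p - y).toNat : ℤ) := by omega
    rw [e]
    exact hup (p - y).toNat
  · have e : p = y - ((y - p).toNat : ℤ) := by omega
    rw [e]
    exact hdown (y - p).toNat


----------------------------------------------------------------
-- resRep / psum / pnorm
----------------------------------------------------------------


variable {a : ZMod n → ℕ}

lemma resRep_bound (hn : 0 < n) (p : ℤ) : 1 ≤ resRep n p ∧ resRep n p ≤ n := by
  have h1 : 0 ≤ (p - 1) % (n : ℤ) := Int.emod_nonneg _ (by exact_mod_cast hn.ne')
  have h2 : (p - 1) % (n : ℤ) < n := Int.emod_lt_of_pos _ (by exact_mod_cast hn)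
  unfold resRep
  omega

lemma resRep_dvd (hn : 0 < n) (p : ℤ) : (n : ℤ) ∣ p - resRep n p := by
  have h1 : 0 ≤ (p - 1) % (n : ℤ) := Int.emod_nonneg _ (by exact_mod_cast hn.ne')
  have h := Int.mul_ediv_add_emod (p - 1) (n : ℤ)
  have h3 : (((p - 1) % (n : ℤ)).toNat : ℤ) = (p - 1) % (n : ℤ) := Int.toNat_of_nonneg h1
  refine ⟨(p - 1) / n, ?_⟩
  unfold resRep
  rw [Nat.cast_add, Nat.cast_one, h3]
  linarith [h]

lemma resRep_congr {p q : ℤ} (h : (n : ℤ) ∣ p - q) : resRep n p = resRep n q := by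
  unfold resRep
  have : (p - 1) % (n : ℤ) = (q - 1) % (n : ℤ) := by
    have h1 : p - 1 ≡ q - 1 [ZMOD (n : ℤ)] := by
      apply Int.modEq_iff_dvd.mpr
      rw [show (q - 1) - (p - 1) = q - p from by ring]
      exact dvd_sub_comm.mp h
    exact h1
  rw [this]

lemma resRep_self (hn : 0 < n) {p : ℤ} (h1 : 1 ≤ p) (h2 : p ≤ n) :
    (resRep n p : ℤ) = p := by
  unfold resRep
  have : (p - 1) % (n : ℤ) = p - 1 := Int.emod_eq_of_lt (by omega) (by omega)
  push_cast
  omega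

lemma natCast_zmod_eq_intCast {r : ℕ} {p : ℤ} (h : (n : ℤ) ∣ p - r) :
    ((r : ℕ) : ZMod n) = ((p : ℤ) : ZMod n) := by
  have h2 : (((r : ℕ) : ℤ) : ZMod n) = ((p : ℤ) : ZMod n) :=
    (intCast_eq_intCast_iff_dvd _ _).mpr h
  rw [Int.cast_natCast] at h2
  exact h2

lemma psum_congr {p q : ℤ} (h : (n : ℤ) ∣ p - q) : psum n a p = psum n a q := by
  unfold psum
  rw [resRep_congr h]

lemma Av_congr {p q : ℤ} (h : (n : ℤ) ∣ p - q) : Av n a p = Av n a q := by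
  unfold Av
  rw [(intCast_eq_intCast_iff_dvd p q).mpr (dvd_sub_comm.mp h)]

lemma psum_step (hn : 0 < n) (htot : psum n a (n : ℤ) = 0) (q : ℤ) :
    psum n a (q + 1) = psum n a q + Av n a (q + 1) - 1 := by
  obtain ⟨hr1, hr2⟩ := resRep_bound hn q
  have hdq := resRep_dvd hn q
  by_cases hr : resRep n q < n
  · have h1 : resRep n (q + 1) = resRep n q + 1 := by
      have e1 : resRep n (q + 1) = resRep n ((resRep n q : ℤ) + 1) :=
        resRep_congr (by obtain ⟨c, hc⟩ := hdq; exact ⟨c, by omega⟩)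
      have e2 : (resRep n ((resRep n q : ℤ) + 1) : ℤ) = (resRep n q : ℤ) + 1 :=
        resRep_self hn (by omega) (by push_cast; omega)
      omega
    have hAv : ((a (((resRep n q + 1 : ℕ)) : ZMod n)) : ℤ) = Av n a (q + 1) := by
      unfold Av
      have hd : (n : ℤ) ∣ (q + 1) - ((resRep n q + 1 : ℕ) : ℤ) := by
        rw [show (q + 1) - ((resRep n q + 1 : ℕ) : ℤ) = q - (resRep n q : ℤ) from by
          push_cast; ring]
        exact hdq
      rw [natCast_zmod_eq_intCast hd]
    unfold psum
    rw [h1, Finset.sum_Icc_succ_top (by omega)]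
    rw [hAv]
    ring
  · have hrn : resRep n q = n := by omega
    have h1 : resRep n (q + 1) = 1 := by
      have e1 : resRep n (q + 1) = resRep n (1 : ℤ) := by
        apply resRep_congr
        rw [show q + 1 - (1 : ℤ) = (q - (resRep n q : ℤ)) + (n : ℤ) from by
          push_cast [hrn]; ring]
        exact dvd_add hdq ⟨1, by ring⟩
      have e2 : (resRep n (1 : ℤ) : ℤ) = 1 := resRep_self hn (by omega) (by push_cast; omega)
      omega
    have hps : psum n a q = 0 := by
      have : psum n a q = psum n a (n : ℤ) := by
        unfold psum
        congr 1
        rw [hrn]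
        congr 1
        have := resRep_self hn (by push_cast; omega : (1:ℤ) ≤ (n:ℤ))
          (le_refl (n : ℤ))
        omega
      rw [this, htot]
    have hAv : ((a (((1 : ℕ)) : ZMod n)) : ℤ) = Av n a (q + 1) := by
      unfold Av
      have hd : (n : ℤ) ∣ (q + 1) - ((1 : ℕ) : ℤ) := by
        rw [show (q + 1) - ((1 : ℕ) : ℤ) = (q - (resRep n q : ℤ)) + (n : ℤ) from by
          push_cast [hrn]; ring]
        exact dvd_add hdq ⟨1, by ring⟩
      rw [natCast_zmod_eq_intCast hd]
    unfold psum at hps ⊢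
    rw [hrn] at hps
    rw [h1, hrn]
    have hIcc : Finset.Icc 1 1 = ({1} : Finset ℕ) := rfl
    rw [hIcc, Finset.sum_singleton, hAv, hps]
    ring

lemma psum_diff (hn : 0 < n) (htot : psum n a (n : ℤ) = 0) :
    ∀ d : ℕ, ∀ p : ℤ,
      psum n a (p + d) = psum n a p + ∑ m ∈ Finset.Ioc p (p + d), (Av n a m - 1) := by
  intro d
  induction d with
  | zero => intro p; simp
  | succ d IH =>
    intro p
    have e : p + ((d + 1 : ℕ) : ℤ) = (p + d) + 1 := by push_cast; ring
    have hs := sum_Ioc_cons (fun m => Av n a m - 1)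
      (show p ≤ p + (d : ℤ) by omega) (show p + (d : ℤ) ≤ p + d + 1 by omega)
    have e2 : Finset.Ioc (p + (d : ℤ)) (p + d + 1) = {p + (d : ℤ) + 1} :=
      Ioc_succ_singleton _
    rw [e2, Finset.sum_singleton] at hs
    rw [e, psum_step hn htot, IH p, ← hs]
    ring

lemma psum_sub (hn : 0 < n) (htot : psum n a (n : ℤ) = 0) {k j : ℤ} (hkj : k ≤ j) :
    psum n a j = psum n a k + (∑ m ∈ Finset.Ioc k j, Av n a m) - (j - k) := by
  have e : j = k + ((j - k).toNat : ℤ) := by omega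
  have h := psum_diff hn htot (j - k).toNat k
  rw [← e] at h
  rw [h, Finset.sum_sub_distrib]
  simp [Int.card_Ioc]
  omega

lemma psum_le_pnorm (hn : 0 < n) (p : ℤ) : psum n a p ≤ pnorm n a := by
  have hfin : ((fun i : ℕ => psum n a (i : ℤ)) '' Set.Icc 1 n).Finite :=
    (Set.finite_Icc _ _).image _
  apply le_csSup hfin.bddAbove
  refine ⟨resRep n p, ?_, ?_⟩
  · obtain ⟨h1, h2⟩ := resRep_bound hn p
    exact ⟨h1, h2⟩
  · exact psum_congr (dvd_sub_comm.mp (resRep_dvd hn p))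

lemma pnorm_le (hn : 0 < n) {c : ℤ} (h : ∀ i : ℕ, 1 ≤ i → i ≤ n → psum n a (i : ℤ) ≤ c) :
    pnorm n a ≤ c := by
  apply csSup_le
  · exact ⟨psum n a ((1 : ℕ) : ℤ), 1, ⟨le_refl _, hn⟩, rfl⟩
  · rintro b ⟨i, ⟨h1, h2⟩, rfl⟩
    exact h i h1 h2



----------------------------------------------------------------
-- the reconstruction lemmas
----------------------------------------------------------------

lemma total (hX : IsTriangulation n X) (hn : 0 < n) :
    psum n (topSeq n X) (n : ℤ) = 0 := by
  have hw := window hX hn 0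
  rw [zero_add] at hw
  have hrr : resRep n (n : ℤ) = n := by
    have := resRep_self (n := n) hn (by push_cast; omega : (1:ℤ) ≤ (n:ℤ)) (le_refl (n : ℤ))
    omega
  unfold psum
  rw [hrr]
  have hbij : ∑ j ∈ Finset.Icc 1 n, ((topSeq n X ((j : ℕ) : ZMod n) : ℤ) - 1) =
      ∑ m ∈ Finset.Ioc (0 : ℤ) (n : ℤ), (Av n (topSeq n X) m - 1) := by
    refine Finset.sum_bij' (fun (j : ℕ) _ => (j : ℤ)) (fun (m : ℤ) _ => m.toNat)
      ?_ ?_ ?_ ?_ ?_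
    · intro j hj
      simp only [Finset.mem_Icc] at hj
      simp only [Finset.mem_Ioc]
      omega
    · intro m hm
      simp only [Finset.mem_Ioc] at hm
      simp only [Finset.mem_Icc]
      omega
    · intro j hj
      omega
    · intro m hm
      simp only [Finset.mem_Ioc] at hm
      omega
    · intro j hj
      have e : ((j : ℕ) : ZMod n) = (((j : ℤ)) : ZMod n) :=
        natCast_zmod_eq_intCast (by simp)
      rw [Av, e]
  rw [hbij, Finset.sum_sub_distrib, hw]
  simp [Int.card_Ioc]

lemma exp_pnorm (hX : IsTriangulation n X) (hn : 0 < n) {j : ℤ} (hj : Exp n X j) :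
    psum n (topSeq n X) j = pnorm n (topSeq n X) := by
  have htot := total hX hn
  apply le_antisymm (psum_le_pnorm hn j)
  apply pnorm_le hn
  intro i h1 h2
  have hne : (n : ℤ) ≠ 0 := by exact_mod_cast hn.ne'
  have hm0 : 0 ≤ (j - 1 - (i : ℤ)) % n := Int.emod_nonneg _ hne
  have hm1 : (j - 1 - (i : ℤ)) % n < n := Int.emod_lt_of_pos _ (by exact_mod_cast hn)
  set k := j - 1 - ((j - 1 - (i : ℤ)) % n) with hk
  have hdvd : (n : ℤ) ∣ (i : ℤ) - k := by
    have h := Int.mul_ediv_add_emod (j - 1 - (i : ℤ)) (n : ℤ)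
    refine ⟨-((j - 1 - (i : ℤ)) / n), ?_⟩
    rw [hk]
    have : (n : ℤ) * -((j - 1 - (i : ℤ)) / n) = -((n : ℤ) * ((j - 1 - (i : ℤ)) / n)) := by
      ring
    omega
  have hpsik : psum n (topSeq n X) (i : ℤ) = psum n (topSeq n X) k := psum_congr hdvd
  have hlow := lower hX hn (j - k).toNat j k hj (by omega) (by omega)
  have hsub := psum_sub hn htot (show k ≤ j by omega)
  omega

lemma unexp_pnorm (hX : IsTriangulation n X) (hn : 0 < n) {j : ℤ} (hj : ¬Exp n X j) :
    psum n (topSeq n X) j < pnorm n (topSeq n X) := by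
  have htot := total hX hn
  unfold Exp at hj
  push_neg at hj
  obtain ⟨x, v, hch, hx, hv⟩ := hj
  have hsplit := sum_Av_split hX.1 hn x j
  have hR : ∑ m ∈ Finset.Ioc x j, rayv n X m = 0 := by
    apply Finset.sum_eq_zero
    intro m hm
    rw [Finset.mem_Ioc] at hm
    rw [rayv, if_neg]
    intro hry
    exact ray_exp hX.1 hry _ _ hch ⟨hm.1, by omega⟩
  have hEsub : endPairs n X x j ⊆ chordsIn n X x j := by
    rintro ⟨d1, d2⟩ hd
    rw [mem_endPairs hX.1] at hd
    rw [mem_chordsIn]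
    obtain ⟨⟨h1, h2⟩, hch'⟩ := hd
    refine ⟨?_, h2, hch'⟩
    by_contra hcon
    exact not_cross hX.1 hch' hch (Or.inl ⟨by omega, h1, by omega⟩)
  have hup := chordsIn_upper hX (v - x).toNat x v j hch (by omega) (by omega) hv
  have hcc := (Finset.card_le_card hEsub).trans hup
  rw [card_endPairs] at hcc
  have hpsub := psum_sub hn htot (show x ≤ j by omega)
  have hple := psum_le_pnorm (a := topSeq n X) hn x
  have h2 := hch.1
  omega

lemma ry_iff_pnorm (hX : IsTriangulation n X) (hn : 0 < n) {y : ℤ} :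
    Ry n X y ↔ psum n (topSeq n X) y = pnorm n (topSeq n X) := by
  constructor
  · intro hry
    exact exp_pnorm hX hn (ray_exp hX.1 hry)
  · intro hps
    apply ray_forced hX
    by_contra hexp
    have := unexp_pnorm hX hn hexp
    omega

lemma chord_psum (hX : IsTriangulation n X) (hn : 0 < n) {x j : ℤ} (hC : Ch n X x j) :
    psum n (topSeq n X) x = psum n (topSeq n X) (j - 1) +
      (((endF n X j).filter (fun z => x ≤ z)).card : ℤ) := by
  have htot := total hX hn
  have h2 := hC.1
  have hsub := psum_sub hn htot (show x ≤ j - 1 by omega)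
  have hsplit := sum_Av_split hX.1 hn x (j - 1)
  have hR : ∑ m ∈ Finset.Ioc x (j - 1), rayv n X m = 0 := by
    apply Finset.sum_eq_zero
    intro m hm
    rw [Finset.mem_Ioc] at hm
    rw [rayv, if_neg]
    intro hry
    exact ray_exp hX.1 hry _ _ hC ⟨hm.1, by omega⟩
  have hside : ∀ d1 d2, x < d2 → d2 ≤ j - 1 → Ch n X d1 d2 → x ≤ d1 := by
    intro d1 d2 ha hb hcc
    by_contra hcon
    exact not_cross hX.1 hcc hC (Or.inl ⟨by omega, ha, by omega⟩)
  have hE : ∑ m ∈ Finset.Ioc x (j - 1), (endF n X m).card =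
      (chordsIn n X x (j - 1)).card := by
    rw [← card_endPairs, endPairs_eq_chordsIn hX.1 hside]
  have hdec : chordsIn n X x j = chordsIn n X x (j - 1) ∪
      ((endF n X j).filter (fun z => x ≤ z)).image (fun z => (z, j)) := by
    ext ⟨d1, d2⟩
    rw [mem_chordsIn, Finset.mem_union, mem_chordsIn, Finset.mem_image]
    constructor
    · rintro ⟨a1, a2, a3⟩
      by_cases hd2 : d2 = j
      · subst hd2
        right
        exact ⟨d1, Finset.mem_filter.mpr ⟨(mem_endF hX.1).mpr a3, a1⟩, rfl⟩
      · exact Or.inl ⟨a1, by omega, a3⟩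
    · rintro (⟨a1, a2, a3⟩ | ⟨z, hz, heq⟩)
      · exact ⟨a1, by omega, a3⟩
      · obtain ⟨rfl, rfl⟩ : z = d1 ∧ j = d2 :=
          ⟨congrArg Prod.fst heq, congrArg Prod.snd heq⟩
        rw [Finset.mem_filter, mem_endF hX.1] at hz
        exact ⟨hz.2, le_refl _, hz.1⟩
  have hdisj : Disjoint (chordsIn n X x (j - 1))
      (((endF n X j).filter (fun z => x ≤ z)).image (fun z => (z, j))) := by
    rw [Finset.disjoint_left]
    rintro ⟨d1, d2⟩ ha hb
    rw [mem_chordsIn] at ha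
    rw [Finset.mem_image] at hb
    obtain ⟨z, -, heq⟩ := hb
    have : j = d2 := congrArg Prod.snd heq
    omega
  have hcards : (chordsIn n X x j).card = (chordsIn n X x (j - 1)).card +
      ((endF n X j).filter (fun z => x ≤ z)).card := by
    rw [hdec, Finset.card_union_of_disjoint hdisj, Finset.card_image_of_injective]
    intro a b hab
    exact congrArg Prod.fst hab
  have hcount := chordsIn_card hX (j - x).toNat x j hC (by omega)
  omega

lemma mid_psum (hX : IsTriangulation n X) (hn : 0 < n) {x j k : ℤ} (hC : Ch n X x j)
    (h1 : x < k) (h2 : k < j - 1) :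
    psum n (topSeq n X) k < psum n (topSeq n X) x := by
  have htot := total hX hn
  have hsub := psum_sub hn htot (show x ≤ k by omega)
  have hsplit := sum_Av_split hX.1 hn x k
  have hR : ∑ m ∈ Finset.Ioc x k, rayv n X m = 0 := by
    apply Finset.sum_eq_zero
    intro m hm
    rw [Finset.mem_Ioc] at hm
    rw [rayv, if_neg]
    intro hry
    exact ray_exp hX.1 hry _ _ hC ⟨hm.1, by omega⟩
  have hEsub : endPairs n X x k ⊆ chordsIn n X x k := by
    rintro ⟨d1, d2⟩ hd
    rw [mem_endPairs hX.1] at hd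
    rw [mem_chordsIn]
    obtain ⟨⟨ha, hb⟩, hch'⟩ := hd
    refine ⟨?_, hb, hch'⟩
    by_contra hcon
    exact not_cross hX.1 hch' hC (Or.inl ⟨by omega, ha, by omega⟩)
  have hup := chordsIn_upper hX (j - x).toNat x j k hC (by omega) (by omega) (by omega)
  have hcc := (Finset.card_le_card hEsub).trans hup
  rw [card_endPairs] at hcc
  omega

lemma kmax_eq (hX : IsTriangulation n X) (hn : 0 < n) {x j : ℤ} (hC : Ch n X x j) :
    kmax n (topSeq n X) j (((endF n X j).filter (fun z => x ≤ z)).card : ℤ) = x := by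
  have h2 := hC.1
  have hxS : x ∈ {k : ℤ | k < j - 1 ∧ psum n (topSeq n X) k =
      psum n (topSeq n X) (j - 1) + (((endF n X j).filter (fun z => x ≤ z)).card : ℤ)} :=
    ⟨by omega, chord_psum hX hn hC⟩
  have hub : ∀ k ∈ {k : ℤ | k < j - 1 ∧ psum n (topSeq n X) k =
      psum n (topSeq n X) (j - 1) + (((endF n X j).filter (fun z => x ≤ z)).card : ℤ)},
      k ≤ x := by
    rintro k ⟨hk1, hk2⟩
    by_contra hcon
    have := mid_psum hX hn hC (by omega) hk1
    have := chord_psum hX hn hC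
    omega
  exact le_antisymm (csSup_le ⟨x, hxS⟩ hub) (le_csSup ⟨x, hub⟩ hxS)

lemma index_surj (hpc : PairwiseCompatible n X) (j : ℤ) {s : ℕ} (hs1 : 1 ≤ s)
    (hs2 : s ≤ (endF n X j).card) :
    ∃ z ∈ endF n X j, ((endF n X j).filter (fun w => z ≤ w)).card = s := by
  have hmono : ∀ z1 ∈ endF n X j, ∀ z2 ∈ endF n X j, z1 < z2 →
      ((endF n X j).filter (fun w => z2 ≤ w)).card <
        ((endF n X j).filter (fun w => z1 ≤ w)).card := by
    intro z1 h1 z2 h2 hlt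
    have hsub : insert z1 ((endF n X j).filter (fun w => z2 ≤ w)) ⊆
        (endF n X j).filter (fun w => z1 ≤ w) := by
      intro w hw
      rcases Finset.mem_insert.mp hw with rfl | hw
      · exact Finset.mem_filter.mpr ⟨h1, le_refl _⟩
      · rw [Finset.mem_filter] at hw ⊢
        exact ⟨hw.1, by omega⟩
    have hni : z1 ∉ (endF n X j).filter (fun w => z2 ≤ w) := by
      rw [Finset.mem_filter]
      rintro ⟨-, hh⟩
      omega
    have := Finset.card_le_card hsub
    rw [Finset.card_insert_of_notMem hni] at this
    omega
  have hinj : Set.InjOn (fun z => ((endF n X j).filter (fun w => z ≤ w)).card)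
      ↑(endF n X j) := by
    intro z1 h1 z2 h2 heq
    rw [Finset.mem_coe] at h1 h2
    rcases lt_trichotomy z1 z2 with hlt | heq' | hlt
    · have := hmono z1 h1 z2 h2 hlt
      simp only at heq
      omega
    · exact heq'
    · have := hmono z2 h2 z1 h1 hlt
      simp only at heq
      omega
  have himg : (endF n X j).image (fun z => ((endF n X j).filter (fun w => z ≤ w)).card) =
      Finset.Icc 1 (endF n X j).card := by
    apply Finset.eq_of_subset_of_card_le
    · intro b hb
      obtain ⟨z, hz, rfl⟩ := Finset.mem_image.mp hb
      rw [Finset.mem_Icc]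
      constructor
      · have : z ∈ (endF n X j).filter (fun w => z ≤ w) :=
          Finset.mem_filter.mpr ⟨hz, le_refl _⟩
        have := Finset.card_pos.mpr ⟨z, this⟩
        omega
      · exact Finset.card_filter_le _ _
    · rw [Nat.card_Icc, Finset.card_image_of_injOn hinj]
      omega
  have hmem : s ∈ (endF n X j).image
      (fun z => ((endF n X j).filter (fun w => z ≤ w)).card) := by
    rw [himg, Finset.mem_Icc]
    exact ⟨hs1, hs2⟩
  obtain ⟨z, hz, hzs⟩ := Finset.mem_image.mp hmem
  exact ⟨z, hz, hzs⟩

lemma tri_subset (hn : 0 < n) {X X' : Set (Arc n)} (hX : IsTriangulation n X)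
    (hX' : IsTriangulation n X') (h : topSeq n X' = topSeq n X) : X ⊆ X' := by
  intro A hA
  cases A with
  | proj c =>
    obtain ⟨y, rfl⟩ := ZMod.intCast_surjective c
    have hry : Ry n X y := hA
    have hps := exp_pnorm hX hn (ray_exp hX.1 hry)
    have hry' : Ry n X' y := by
      rw [ry_iff_pnorm hX' hn, h]
      exact hps
    exact hry'
  | inner i t =>
    obtain ⟨ht2, htn⟩ := hX.1.1 _ hA
    obtain ⟨x, rfl⟩ := ZMod.intCast_surjective i
    have hC : Ch n X x (x + t) := by
      refine ⟨by omega, ?_⟩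
      have e : (x + (t : ℤ) - x).toNat = t := by omega
      rw [e]
      exact hA
    have hxE : x ∈ endF n X (x + t) := (mem_endF hX.1).mpr hC
    have hs1 : 1 ≤ ((endF n X (x + t)).filter (fun z => x ≤ z)).card := by
      have : x ∈ (endF n X (x + t)).filter (fun z => x ≤ z) :=
        Finset.mem_filter.mpr ⟨hxE, le_refl _⟩
      have := Finset.card_pos.mpr ⟨x, this⟩
      omega
    have hsleX : ((endF n X (x + t)).filter (fun z => x ≤ z)).card ≤
        (endF n X (x + t)).card := Finset.card_filter_le _ _
    have hriff : Ry n X (x + t) ↔ Ry n X' (x + t) := by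
      rw [ry_iff_pnorm hX hn, ry_iff_pnorm hX' hn, h]
    have hreq : rayv n X (x + t) = rayv n X' (x + t) := by
      unfold rayv
      by_cases hr : Ry n X (x + t)
      · rw [if_pos hr, if_pos (hriff.mp hr)]
      · rw [if_neg hr, if_neg (fun hh => hr (hriff.mpr hh))]
    have hcards : (endF n X (x + t)).card = (endF n X' (x + t)).card := by
      have e1 := Av_top hX.1 hn (x + t)
      have e2 := Av_top hX'.1 hn (x + t)
      rw [h] at e2
      omega
    obtain ⟨z, hz, hzs⟩ := index_surj hX'.1 (x + t) hs1 (by omega)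
    have hC' : Ch n X' z (x + t) := (mem_endF hX'.1).mp hz
    have k1 := kmax_eq hX hn hC
    have k2 := kmax_eq hX' hn hC'
    rw [hzs, h] at k2
    have hzx : z = x := by rw [← k1, ← k2]
    subst hzx
    have := hC'.2
    have e : (z + (t : ℤ) - z).toNat = t := by omega
    rw [e] at this
    exact this



/-- The map `X ↦ top(X)` is injective on triangulations of the punctured
`n`-gon: if `X, X' ∈ 𝒯(n)` satisfy `top(X) = top(X')`, then `X = X'`. -/
theorem top_injective_on_triangulations (n : ℕ) (hn : 0 < n)
    (X X' : Set (Arc n)) (hX : IsTriangulation n X) (hX' : IsTriangulation n X')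
    (h : topSeq n X = topSeq n X') : X = X' :=
  Set.Subset.antisymm (tri_subset hn hX hX' h.symm) (tri_subset hn hX' hX h)

end Punctured
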